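/- For every subset W ⊆ U and every integer j with 2 ≤ j ≤ p, the predicate T(W, j) holds if and only if there exists a vertex v ∈ V(C_j) such that V(C_j) ⊆ N[v] ∪ N[S'], N[v] ∩ N[S'] = ∅, N[v] ∩ U ⊆ W, and T(W ∖ N[v], j−1) holds. -/

import Mathlib

/-- The closed neighborhood `N[v]` of a vertex `v`. -/
def closedNbhd {V : Type*} (G : SimpleGraph V) (v : V) : Set V :=
  {w | G.Adj v w ∨ w = v}

/-- The closed neighborhood `N[X] = ⋃_{v ∈ X} N[v]` of a set of vertices. -/
def closedNbhdSet {V : Type*} (G : SimpleGraph V) (X : Set V) : Set V :=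
  ⋃ v ∈ X, closedNbhd G v

/-- The graph `G - S`: the graph obtained from `G` by deleting the vertices of `S`
(kept on the same vertex type; vertices of `S` become isolated). -/
def deleteSet {V : Type*} (G : SimpleGraph V) (S : Set V) : SimpleGraph V where
  Adj v w := G.Adj v w ∧ v ∉ S ∧ w ∉ S
  symm := by
    constructor
    intro v w h
    exact ⟨h.1.symm, h.2.2, h.2.1⟩
  loopless := by
    constructor
    intro v h
    exact G.loopless.irrefl v h.1

/-- The predicate `T(W, j)`: there exist vertices `v i ∈ C i` for the first `j`
clusters such that `W` is the disjoint union of the sets `N[v i] ∩ U` for `i < j`,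
and for every `i < j`, `C i ⊆ N[v i] ∪ N[S']` and `N[v i] ∩ N[S'] = ∅`. -/
def TPred {V : Type*} (G : SimpleGraph V) {p : ℕ} (C : Fin p → Set V)
    (S' U : Set V) (W : Set V) (j : ℕ) : Prop :=
  ∃ v : Fin p → V,
    (∀ i : Fin p, (i : ℕ) < j → v i ∈ C i) ∧
    (W = ⋃ (i : Fin p), ⋃ (_ : (i : ℕ) < j), (closedNbhd G (v i) ∩ U)) ∧
    (∀ i i' : Fin p, (i : ℕ) < j → (i' : ℕ) < j → i ≠ i' →
      (closedNbhd G (v i) ∩ U) ∩ (closedNbhd G (v i') ∩ U) = ∅) ∧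
    (∀ i : Fin p, (i : ℕ) < j →
      C i ⊆ closedNbhd G (v i) ∪ closedNbhdSet G S' ∧
      closedNbhd G (v i) ∩ closedNbhdSet G S' = ∅)

/-- Setup: `S ⊆ V(G)` is such that the connected components of `G - S` are
`C 0, …, C (p-1)`, each of diameter at most 2; `S' ⊆ S` has pairwise disjoint closed
neighborhoods; `U = S \ N[S']`.
For every subset `W ⊆ U` and every integer `j` with `2 ≤ j ≤ p`, the predicate
`T(W, j)` holds if and only if there exists a vertex `v ∈ C_j` (the `j`-th cluster)
such that `C_j ⊆ N[v] ∪ N[S']`, `N[v] ∩ N[S'] = ∅`, `N[v] ∩ U ⊆ W`, and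
`T(W \ N[v], j - 1)` holds. -/
theorem tpred_recurrence {V : Type*} [Fintype V] (G : SimpleGraph V)
    (p : ℕ) (S S' U : Set V) (C : Fin p → Set V)
    (hS'S : S' ⊆ S)
    (hS'disj : ∀ s ∈ S', ∀ t ∈ S', s ≠ t → closedNbhd G s ∩ closedNbhd G t = ∅)
    (hU : U = S \ closedNbhdSet G S')
    (hCcomp : ∀ i, ∃ K : (deleteSet G S).ConnectedComponent, C i = K.supp)
    (hCS : ∀ i, C i ∩ S = ∅)
    (hCcover : (⋃ i, C i) = Sᶜ)
    (hCdisj : ∀ i j, i ≠ j → C i ∩ C j = ∅)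
    (hCdiam : ∀ i, ∀ v ∈ C i, ∀ w ∈ C i,
      v = w ∨ (deleteSet G S).Adj v w ∨
        ∃ x, (deleteSet G S).Adj v x ∧ (deleteSet G S).Adj x w)
    (W : Set V) (hW : W ⊆ U) (j : ℕ) (hj2 : 2 ≤ j) (hjp : j ≤ p) :
    TPred G C S' U W j ↔
      ∃ v ∈ C ⟨j - 1, by omega⟩,
        C ⟨j - 1, by omega⟩ ⊆ closedNbhd G v ∪ closedNbhdSet G S' ∧
        closedNbhd G v ∩ closedNbhdSet G S' = ∅ ∧
        closedNbhd G v ∩ U ⊆ W ∧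
        TPred G C S' U (W \ closedNbhd G v) (j - 1) := by
  classical
  have hk : j - 1 < p := by omega
  set k : Fin p := ⟨j - 1, hk⟩ with hkdef
  have hkv : (k : ℕ) = j - 1 := rfl
  constructor
  · rintro ⟨v, hmem, hWeq, hdisj, hcov⟩
    refine ⟨v k, hmem k (by omega), (hcov k (by omega)).1, (hcov k (by omega)).2, ?_, ?_⟩
    · intro x hx
      rw [hWeq]
      exact Set.mem_iUnion.2 ⟨k, Set.mem_iUnion.2 ⟨by omega, hx⟩⟩
    · refine ⟨v, fun i hi => hmem i (by omega), ?_,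
        fun i i' hi hi' => hdisj i i' (by omega) (by omega),
        fun i hi => hcov i (by omega)⟩
      ext x
      simp only [Set.mem_diff, hWeq, Set.mem_iUnion]
      constructor
      · rintro ⟨⟨i, hi, hxi⟩, hxk⟩
        have hik : i ≠ k := by rintro rfl; exact hxk hxi.1
        have : (i : ℕ) ≠ j - 1 := fun h => hik (Fin.ext h)
        exact ⟨i, by omega, hxi⟩
      · rintro ⟨i, hi, hxi⟩
        refine ⟨⟨i, by omega, hxi⟩, fun hxk => ?_⟩
        have hik : i ≠ k := by
          intro h
          rw [h, hkv] at hi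
          omega
        exact (Set.eq_empty_iff_forall_notMem.1
          (hdisj i k (by omega) (by omega) hik) x) ⟨hxi, hxk, hxi.2⟩
  · rintro ⟨v0, hv0C, hv0cov, hv0S', hv0U, u, hmem, hWeq, hdisj, hcov⟩
    refine ⟨Function.update u k v0, ?_, ?_, ?_, ?_⟩
    · intro i hi
      by_cases hik : i = k
      · subst hik
        rw [Function.update_self]
        exact hv0C
      · rw [Function.update_of_ne hik]
        refine hmem i ?_
        have : (i : ℕ) ≠ j - 1 := fun h => hik (Fin.ext h)
        omega
    · ext x
      simp only [Set.mem_iUnion]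
      constructor
      · intro hx
        by_cases hxv : x ∈ closedNbhd G v0
        · exact ⟨k, by omega, by rw [Function.update_self]; exact ⟨hxv, hW hx⟩⟩
        · have hx' : x ∈ W \ closedNbhd G v0 := ⟨hx, hxv⟩
          rw [hWeq] at hx'
          simp only [Set.mem_iUnion] at hx'
          obtain ⟨i, hi, hxi⟩ := hx'
          have hik : i ≠ k := by
            intro h
            rw [h, hkv] at hi
            omega
          exact ⟨i, by omega, by rw [Function.update_of_ne hik]; exact hxi⟩
      · rintro ⟨i, hi, hxi⟩
        by_cases hik : i = k
        · subst hik
          rw [Function.update_self] at hxi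
          exact hv0U hxi
        · rw [Function.update_of_ne hik] at hxi
          have : (i : ℕ) ≠ j - 1 := fun h => hik (Fin.ext h)
          have hx' : x ∈ W \ closedNbhd G v0 := by
            rw [hWeq]
            exact Set.mem_iUnion.2 ⟨i, Set.mem_iUnion.2 ⟨by omega, hxi⟩⟩
          exact hx'.1
    · intro i i' hi hi' hne
      apply Set.eq_empty_iff_forall_notMem.2
      rintro x ⟨hx1, hx2⟩
      by_cases hik : i = k
      · subst hik
        have hi'k : i' ≠ k := fun h => hne h.symm
        rw [Function.update_self] at hx1
        rw [Function.update_of_ne hi'k] at hx2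
        have : (i' : ℕ) ≠ j - 1 := fun h => hi'k (Fin.ext h)
        have hx' : x ∈ W \ closedNbhd G v0 := by
          rw [hWeq]
          exact Set.mem_iUnion.2 ⟨i', Set.mem_iUnion.2 ⟨by omega, hx2⟩⟩
        exact hx'.2 hx1.1
      · by_cases hi'k : i' = k
        · subst hi'k
          rw [Function.update_self] at hx2
          rw [Function.update_of_ne hik] at hx1
          have : (i : ℕ) ≠ j - 1 := fun h => hik (Fin.ext h)
          have hx' : x ∈ W \ closedNbhd G v0 := by
            rw [hWeq]
            exact Set.mem_iUnion.2 ⟨i, Set.mem_iUnion.2 ⟨by omega, hx1⟩⟩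
          exact hx'.2 hx2.1
        · rw [Function.update_of_ne hik] at hx1
          rw [Function.update_of_ne hi'k] at hx2
          have h1 : (i : ℕ) ≠ j - 1 := fun h => hik (Fin.ext h)
          have h2 : (i' : ℕ) ≠ j - 1 := fun h => hi'k (Fin.ext h)
          exact (Set.eq_empty_iff_forall_notMem.1
            (hdisj i i' (by omega) (by omega) hne) x) ⟨hx1, hx2⟩
    · intro i hi
      by_cases hik : i = k
      · subst hik
        rw [Function.update_self]
        exact ⟨hv0cov, hv0S'⟩
      · rw [Function.update_of_ne hik]
        have : (i : ℕ) ≠ j - 1 := fun h => hik (Fin.ext h)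
        exact hcov i (by omega)
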